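/- arXiv:1910.06173 — 7 statements merged into one kernel-verified Lean document; each statement's English description precedes it below -/
import Mathlib

section
/- Let R be a ring and let L and M be uniform R-modules, both of finite length n. If there exist R-module homomorphisms f: L → M and g: M → L and a nonzero element x ∈ L with (g ∘ f)(x) = x, then L and M are isomorphic. -/
/-- A module is *uniform* if any two nonzero submodules intersect nontrivially. -/
def IsUniformModule (R M : Type*) [Ring R] [AddCommGroup M] [Module R M] : Prop :=
  ∀ N P : Submodule R M, N ≠ ⊥ → P ≠ ⊥ → N ⊓ P ≠ ⊥

/-- A module has (composition) length `n` if it admits a composition series from `⊥` to `⊤`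
with `n` steps. -/
def HasLength (R M : Type*) [Ring R] [AddCommGroup M] [Module R M] (n : ℕ) : Prop :=
  ∃ s : CompositionSeries (Submodule R M), s.head = ⊥ ∧ s.last = ⊤ ∧ s.length = n

theorem iso_of_comp_fixed_point
    {R L M : Type*} [Ring R] [AddCommGroup L] [Module R L] [AddCommGroup M] [Module R M]
    (n : ℕ) (hLlen : HasLength R L n) (hMlen : HasLength R M n)
    (hL : IsUniformModule R L) (hM : IsUniformModule R M)
    (f : L →ₗ[R] M) (g : M →ₗ[R] L) (x : L) (hx : x ≠ 0) (hfix : g (f x) = x) :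
    Nonempty (L ≃ₗ[R] M) := by
  -- L has finite length, hence is Artinian
  have hfl : IsFiniteLength R L :=
    isFiniteLength_iff_exists_compositionSeries.mpr
      ⟨hLlen.choose, hLlen.choose_spec.1, hLlen.choose_spec.2.1⟩
  have hart : IsArtinian R L := (isFiniteLength_iff_isNoetherian_isArtinian.mp hfl).2
  -- g ∘ f is injective: its kernel meets the fixed-point submodule trivially
  have hgf_inj : Function.Injective (g ∘ₗ f) := by
    rw [← LinearMap.ker_eq_bot]
    by_contra hker
    have hfixN : LinearMap.ker (g ∘ₗ f - LinearMap.id) ≠ ⊥ := by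
      intro h
      have : x ∈ LinearMap.ker (g ∘ₗ f - LinearMap.id) := by
        simp [LinearMap.mem_ker, hfix]
      rw [h, Submodule.mem_bot] at this
      exact hx this
    have := hL _ _ hker hfixN
    apply this
    rw [eq_bot_iff]
    rintro y hy
    rw [Submodule.mem_inf] at hy
    obtain ⟨hy1, hy2⟩ := hy
    rw [LinearMap.mem_ker, LinearMap.comp_apply] at hy1
    rw [LinearMap.mem_ker, LinearMap.sub_apply, LinearMap.id_apply, sub_eq_zero,
      LinearMap.comp_apply] at hy2
    exact (Submodule.mem_bot _).mpr (by rw [← hy2, hy1])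
  -- g ∘ f is surjective, hence g is surjective
  have hgf_surj : Function.Surjective (g ∘ₗ f) :=
    IsArtinian.surjective_of_injective_endomorphism (g ∘ₗ f) hgf_inj
  have hg_surj : Function.Surjective g := by
    intro y
    obtain ⟨z, hz⟩ := hgf_surj y
    exact ⟨f z, hz⟩
  -- g is injective: ker g meets the fixed-point submodule of f ∘ g trivially
  have hfx : f x ≠ 0 := fun h => hx (by rw [← hfix, h, map_zero])
  have hg_inj : Function.Injective g := by
    rw [← LinearMap.ker_eq_bot]
    by_contra hker
    have hfixN : LinearMap.ker (f ∘ₗ g - LinearMap.id) ≠ ⊥ := by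
      intro h
      have : f x ∈ LinearMap.ker (f ∘ₗ g - LinearMap.id) := by
        simp [LinearMap.mem_ker, hfix]
      rw [h, Submodule.mem_bot] at this
      exact hfx this
    have := hM _ _ hker hfixN
    apply this
    rw [eq_bot_iff]
    rintro y hy
    rw [Submodule.mem_inf] at hy
    obtain ⟨hy1, hy2⟩ := hy
    rw [LinearMap.mem_ker] at hy1
    rw [LinearMap.mem_ker, LinearMap.sub_apply, LinearMap.id_apply, sub_eq_zero,
      LinearMap.comp_apply] at hy2
    exact (Submodule.mem_bot _).mpr (by rw [← hy2, hy1, map_zero])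
  exact ⟨(LinearEquiv.ofBijective g ⟨hg_inj, hg_surj⟩).symm⟩
end

section
/- Let R be a ring and let L and M be uniform R-modules, both of finite length n. Suppose there exist n homomorphisms f₁: L → M, f₂: M → L, f₃: L → M, ..., alternating between Hom(L,M) and Hom(M,L), such that the composite fₙ ∘ ⋯ ∘ f₁ is nonzero. Then L is isomorphic to M. -/
/-- The composite `f_k ∘ ⋯ ∘ f₁` of an alternating sequence of maps
`f₁ : L → M`, `f₂ : M → L`, `f₃ : L → M`, … (the odd-indexed maps are taken from the
sequence `u`, the even-indexed ones from `v`).  The result lands in `L` or in `M`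
according to the parity of `k`, whence the sum type. -/
def altComp {R L M : Type*} [Ring R] [AddCommGroup L] [Module R L] [AddCommGroup M] [Module R M]
    (u : ℕ → (L →ₗ[R] M)) (v : ℕ → (M →ₗ[R] L)) : ℕ → ((L →ₗ[R] L) ⊕ (L →ₗ[R] M))
  | 0 => Sum.inl LinearMap.id
  | k + 1 =>
    match altComp u v k with
    | Sum.inl h => Sum.inr ((u k).comp h)
    | Sum.inr h => Sum.inl ((v k).comp h)


private lemma le_of_steps {α : Type*} [Preorder α] {f : ℕ → α} {m : ℕ}
    (h : ∀ i < m, f i ≤ f (i+1)) : ∀ i j, i ≤ j → j ≤ m → f i ≤ f j := by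
  intro i j hij hjm
  induction j with
  | zero => obtain rfl : i = 0 := Nat.le_zero.mp hij; exact le_rfl
  | succ j ih =>
    rcases Nat.lt_or_ge i (j+1) with h1 | h1
    · exact (ih (Nat.lt_succ_iff.mp h1) (by omega)).trans (h j (by omega))
    · obtain rfl : i = j + 1 := le_antisymm hij h1; exact le_rfl

private lemma chain_le_of_covChain {α : Type*} [Lattice α] [IsModularLattice α] :
    ∀ (n : ℕ) (c : ℕ → α), (∀ i < n, c i ⋖ c (i+1)) →
      ∀ (m : ℕ) (p : ℕ → α), (∀ i < m, p i < p (i+1)) → c 0 ≤ p 0 → p m ≤ c n → m ≤ n := by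
  intro n
  induction n with
  | zero =>
    intro c _ m p hp h0 hm
    by_contra h
    have h1 : p 0 < p m :=
      (hp 0 (by omega)).trans_le (le_of_steps (fun i hi => (hp i hi).le) 1 m (by omega) le_rfl)
    exact (h1.trans_le (hm.trans h0)).false
  | succ n ih =>
    intro c hc m p hp h0 hm
    rcases Nat.eq_zero_or_pos m with rfl | hmpos
    · omega
    set N := c n with hN
    have hcov : N ⋖ c (n+1) := hc n (by omega)
    have hc0N : c 0 ≤ N := le_of_steps (fun i hi => (hc i (by omega)).le) 0 n (by omega) le_rfl
    have hpmono : ∀ i j, i ≤ j → j ≤ m → p i ≤ p j :=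
      le_of_steps (fun i hi => (hp i hi).le)
    -- a collapsed index is below N
    have hle : ∀ i, i < m → p i ⊓ N = p (i+1) ⊓ N → p i ≤ N := by
      intro i him hcoll
      by_contra hnot
      have hlt : p i ⊔ N < p (i+1) ⊔ N :=
        sup_lt_sup_of_lt_of_inf_le_inf (hp i him) (le_of_eq hcoll.symm)
      have h1 : p i ⊔ N ≤ c (n+1) :=
        sup_le ((hpmono i m (by omega) le_rfl).trans hm) hcov.le
      rcases hcov.eq_or_eq (le_sup_right : N ≤ p i ⊔ N) h1 with h2 | h2
      · exact hnot (sup_eq_right.mp h2)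
      · have h3 : p (i+1) ⊔ N ≤ c (n+1) :=
          sup_le ((hpmono (i+1) m (by omega) le_rfl).trans hm) hcov.le
        rw [h2] at hlt
        exact absurd h3 (not_le_of_gt hlt)
    -- uniqueness of collapsed index
    have huniq : ∀ i j, i < j → j < m → p i ⊓ N = p (i+1) ⊓ N →
        p j ⊓ N = p (j+1) ⊓ N → False := by
      intro i j hij hjm hci hcj
      have h1 : p (i+1) ≤ N := (hpmono (i+1) j hij (by omega)).trans (hle j hjm hcj)
      have h2 : p (i+1) ≤ p i := by
        calc p (i+1) = p (i+1) ⊓ N := (inf_eq_left.mpr h1).symm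
        _ = p i ⊓ N := hci.symm
        _ ≤ p i := inf_le_left
      exact absurd h2 (not_le_of_gt (hp i (by omega)))
    by_cases hex : ∃ i, i < m ∧ p i ⊓ N = p (i+1) ⊓ N
    · obtain ⟨i₀, hi₀m, hcol⟩ := hex
      have hnc : ∀ i, i < m → i ≠ i₀ → p i ⊓ N < p (i+1) ⊓ N := by
        intro i him hne
        refine lt_of_le_of_ne (inf_le_inf_right N (hp i him).le) ?_
        intro hcoll
        rcases Nat.lt_or_ge i i₀ with h | h
        · exact huniq i i₀ h hi₀m hcoll hcol
        · exact huniq i₀ i (lt_of_le_of_ne h (Ne.symm hne)) him hcol hcoll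
      have key : m - 1 ≤ n := by
        refine ih c (fun i hi => hc i (by omega)) (m-1)
          (fun i => (if i ≤ i₀ then p i else p (i+1)) ⊓ N) ?_ ?_ inf_le_right
        · intro i hi
          rcases Nat.lt_or_ge (i+1) (i₀+1) with h1 | h1
          · simp only [if_pos (by omega : i ≤ i₀), if_pos (by omega : i + 1 ≤ i₀)]
            exact hnc i (by omega) (by omega)
          · rcases Nat.lt_or_ge i (i₀+1) with h2 | h2
            · obtain rfl : i₀ = i := by omega
              simp only [le_refl, if_pos, if_neg (by omega : ¬ i₀ + 1 ≤ i₀)]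
              rw [hcol]
              exact hnc (i₀+1) (by omega) (by omega)
            · simp only [if_neg (by omega : ¬ i ≤ i₀), if_neg (by omega : ¬ i + 1 ≤ i₀)]
              exact hnc (i+1) (by omega) (by omega)
        · simp only [if_pos (Nat.zero_le i₀)]
          exact le_inf h0 hc0N
      omega
    · push_neg at hex
      have key : m ≤ n := by
        refine ih c (fun i hi => hc i (by omega)) m (fun i => p i ⊓ N) ?_ (le_inf h0 hc0N)
          inf_le_right
        intro i hi
        exact lt_of_le_of_ne (inf_le_inf_right N (hp i hi).le) (hex i hi)
      omega

private lemma chain_le_length {R A : Type*} [Ring R] [AddCommGroup A] [Module R A]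
    {n m : ℕ} (hA : ∃ s : CompositionSeries (Submodule R A),
      s.head = ⊥ ∧ s.last = ⊤ ∧ s.length = n)
    (p : ℕ → Submodule R A) (hp : ∀ i < m, p i < p (i+1)) : m ≤ n := by
  obtain ⟨s, hsh, hsl, hslen⟩ := hA
  subst hslen
  set c : ℕ → Submodule R A :=
    fun i => s.toFun ⟨min i s.length, Nat.lt_succ_of_le (min_le_right _ _)⟩ with hc
  have hcstep : ∀ i < s.length, c i ⋖ c (i+1) := by
    intro i hi
    have h := s.step ⟨i, hi⟩
    have e1 : c i = s.toFun (Fin.castSucc ⟨i, hi⟩) := by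
      rw [hc]; exact congrArg s.toFun (Fin.ext (by simpa using Nat.min_eq_left hi.le))
    have e2 : c (i+1) = s.toFun (Fin.succ ⟨i, hi⟩) := by
      rw [hc]; exact congrArg s.toFun (Fin.ext (by simpa using Nat.min_eq_left hi))
    rw [e1, e2]
    exact h
  have h0 : c 0 = ⊥ := by
    rw [← hsh]; exact congrArg s.toFun (Fin.ext (by simp))
  have hlast : c s.length = ⊤ := by
    rw [← hsl]; exact congrArg s.toFun (Fin.ext (by simp [Fin.last]))
  exact chain_le_of_covChain s.length c hcstep m p hp (h0 ▸ bot_le) (hlast ▸ le_top)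

private lemma bij_of_inj {R A B : Type*} [Ring R] [AddCommGroup A] [Module R A]
    [AddCommGroup B] [Module R B] {n : ℕ}
    (hA : ∃ s : CompositionSeries (Submodule R A), s.head = ⊥ ∧ s.last = ⊤ ∧ s.length = n)
    (hB : ∃ s : CompositionSeries (Submodule R B), s.head = ⊥ ∧ s.last = ⊤ ∧ s.length = n)
    (f : A →ₗ[R] B) (hf : LinearMap.ker f = ⊥) : Function.Bijective f := by
  have hinj : Function.Injective f := LinearMap.ker_eq_bot.mp hf
  refine ⟨hinj, ?_⟩
  rw [← LinearMap.range_eq_top]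
  by_contra hr
  obtain ⟨s, hsh, hsl, hslen⟩ := hA
  subst hslen
  set p : ℕ → Submodule R B := fun i =>
    if h : i ≤ s.length then Submodule.map f (s.toFun ⟨i, Nat.lt_succ_of_le h⟩) else ⊤ with hpdef
  have hchain : ∀ i < s.length + 1, p i < p (i+1) := by
    intro i hi
    rcases Nat.lt_or_ge i s.length with h | h
    · have e1 : p i = Submodule.map f (s.toFun ⟨i, Nat.lt_succ_of_le h.le⟩) := by
        rw [hpdef]; exact dif_pos h.le
      have e2 : p (i+1) = Submodule.map f (s.toFun ⟨i+1, Nat.succ_lt_succ h⟩) := by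
        rw [hpdef]; exact dif_pos h
      rw [e1, e2]
      exact Submodule.map_strictMono_of_injective hinj
        (s.strictMono (Fin.mk_lt_mk.mpr (Nat.lt_succ_self i)))
    · obtain rfl : i = s.length := by omega
      have e1 : p s.length = Submodule.map f (s.toFun ⟨s.length, Nat.lt_succ_of_le h⟩) := by
        rw [hpdef]; exact dif_pos (le_refl _)
      have e2 : p (s.length+1) = ⊤ := by rw [hpdef]; exact dif_neg (by omega)
      have e3 : s.toFun ⟨s.length, Nat.lt_succ_of_le h⟩ = ⊤ := by
        rw [← hsl]; exact congrArg s.toFun (Fin.ext (by simp [Fin.last]))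
      rw [e1, e2, e3, Submodule.map_top]
      exact lt_top_iff_ne_top.mpr hr
  have := chain_le_length hB p hchain
  omega

theorem iso_of_alternating_comp_ne_zero
    {R L M : Type*} [Ring R] [AddCommGroup L] [Module R L] [AddCommGroup M] [Module R M]
    (n : ℕ) (hLlen : HasLength R L n) (hMlen : HasLength R M n)
    (hL : IsUniformModule R L) (hM : IsUniformModule R M)
    (u : ℕ → (L →ₗ[R] M)) (v : ℕ → (M →ₗ[R] L))
    (hne : (altComp u v n).elim (· ≠ 0) (· ≠ 0)) :
    Nonempty (L ≃ₗ[R] M) := by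
  classical
  have hzero : ∀ k, ((altComp u v k).elim (· = 0) (· = 0)) →
      ((altComp u v (k+1)).elim (· = 0) (· = 0)) := by
    intro k hk
    rcases hgk : altComp u v k with h | h <;> rw [hgk] at hk <;>
      simp only [Sum.elim_inl, Sum.elim_inr] at hk <;>
      simp [altComp, hgk, hk]
  have hnz : ∀ k, k ≤ n → ¬ ((altComp u v k).elim (· = 0) (· = 0)) := by
    intro k hk h0
    have hall : ∀ j, k ≤ j → (altComp u v j).elim (· = 0) (· = 0) := by
      intro j hj
      induction j, hj using Nat.le_induction with
      | base => exact h0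
      | succ j hj ih => exact hzero j ih
    have hn := hall n hk
    rcases hgn : altComp u v n with g | g <;> rw [hgn] at hn hne <;>
      simp only [Sum.elim_inl, Sum.elim_inr] at hn hne <;> exact hne hn
  set K : ℕ → Submodule R L := fun k => (altComp u v k).elim LinearMap.ker LinearMap.ker with hK
  have hKmono : ∀ k, K k ≤ K (k+1) := by
    intro k
    rcases hgk : altComp u v k with h | h <;>
      simp only [hK, altComp, hgk, Sum.elim_inl, Sum.elim_inr] <;>
      exact LinearMap.ker_le_ker_comp _ _
  by_cases hstrict : ∀ k, k < n → K k < K (k+1)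
  · exfalso
    have hKn : K n ≠ ⊤ := by
      have hn := hnz n le_rfl
      rcases hgn : altComp u v n with g | g <;> rw [hgn] at hn <;>
        simp only [hK, hgn, Sum.elim_inl, Sum.elim_inr] at hn ⊢ <;>
        simpa [LinearMap.ker_eq_top] using hn
    have hchain : ∀ i, i < n + 1 → (if i ≤ n then K i else ⊤) < (if i+1 ≤ n then K (i+1) else ⊤) := by
      intro i hi
      rcases Nat.lt_or_ge i n with h | h
      · rw [if_pos h.le, if_pos (by omega : i + 1 ≤ n)]
        exact hstrict i h
      · obtain rfl : i = n := by omega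
        rw [if_pos le_rfl, if_neg (by omega)]
        exact lt_top_iff_ne_top.mpr hKn
    have := chain_le_length hLlen _ hchain
    omega
  · push_neg at hstrict
    obtain ⟨k, hk, hnlt⟩ := hstrict
    have heq : K k = K (k+1) := ((hKmono k).lt_or_eq).resolve_left hnlt
    have hknz := hnz k hk.le
    rcases hgk : altComp u v k with h | h
    · -- h : L →ₗ[R] L, next map is u k
      rw [hgk] at hknz
      simp only [Sum.elim_inl] at hknz
      have heq' : LinearMap.ker h = LinearMap.ker ((u k).comp h) := by
        have := heq
        simp only [hK, altComp, hgk, Sum.elim_inl, Sum.elim_inr] at this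
        exact this
      have hrange : LinearMap.range h ≠ ⊥ := by
        simpa [LinearMap.range_eq_bot] using hknz
      have hker : LinearMap.ker (u k) ⊓ LinearMap.range h = ⊥ := by
        rw [eq_bot_iff]
        rintro x ⟨hx1, y, rfl⟩
        have : y ∈ LinearMap.ker ((u k).comp h) := by
          simpa [LinearMap.mem_ker] using hx1
        rw [← heq'] at this
        simpa [Submodule.mem_bot] using this
      have hkeru : LinearMap.ker (u k) = ⊥ := by
        by_contra hne'
        exact hL _ _ hne' hrange hker
      exact ⟨LinearEquiv.ofBijective (u k) (bij_of_inj hLlen hMlen (u k) hkeru)⟩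
    · -- h : L →ₗ[R] M, next map is v k
      rw [hgk] at hknz
      simp only [Sum.elim_inr] at hknz
      have heq' : LinearMap.ker h = LinearMap.ker ((v k).comp h) := by
        have := heq
        simp only [hK, altComp, hgk, Sum.elim_inl, Sum.elim_inr] at this
        exact this
      have hrange : LinearMap.range h ≠ ⊥ := by
        simpa [LinearMap.range_eq_bot] using hknz
      have hker : LinearMap.ker (v k) ⊓ LinearMap.range h = ⊥ := by
        rw [eq_bot_iff]
        rintro x ⟨hx1, y, rfl⟩
        have : y ∈ LinearMap.ker ((v k).comp h) := by
          simpa [LinearMap.mem_ker] using hx1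
        rw [← heq'] at this
        simpa [Submodule.mem_bot] using this
      have hkerv : LinearMap.ker (v k) = ⊥ := by
        by_contra hne'
        exact hM _ _ hne' hrange hker
      exact ⟨(LinearEquiv.ofBijective (v k) (bij_of_inj hMlen hLlen (v k) hkerv)).symm⟩
end

section
/- Let R be a ring and let L and M be uniserial R-modules whose lattices of submodules are both order-isomorphic to ℕ ∪ {+∞} under reverse inclusion; i.e., the nonzero submodules of L form a strictly decreasing chain L = L₀ ⊃ L₁ ⊃ L₂ ⊃ ⋯ comprising all nonzero submodules, and similarly M = M₀ ⊃ M₁ ⊃ M₂ ⊃ ⋯. If there exist homomorphisms f: L → M, g: M → L and a nonzero x ∈ L with (g ∘ f)(x) = x, then f is an isomorphism L ≅ M. -/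
/-- A module is *uniserial* if its submodules are totally ordered by inclusion. -/
def IsUniserialModule (R M : Type*) [Ring R] [AddCommGroup M] [Module R M] : Prop :=
  ∀ N P : Submodule R M, N ≤ P ∨ P ≤ N

/-- The nonzero submodules of `M` form a strictly decreasing chain
`M = M₀ ⊃ M₁ ⊃ M₂ ⊃ ⋯` comprising *all* the nonzero submodules; i.e. the submodule
lattice is order-isomorphic to `ℕ ∪ {+∞}` under reverse inclusion. -/
def HasCoNatChain (R M : Type*) [Ring R] [AddCommGroup M] [Module R M] : Prop :=
  ∃ c : ℕ → Submodule R M, StrictAnti c ∧ c 0 = ⊤ ∧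
    (∀ N : Submodule R M, N ≠ ⊥ ↔ ∃ n, N = c n)

/-- Auxiliary: an injective map sends the `n`-th chain submodule into the `(j+n)`-th. -/
lemma chain_map_exists {R L M : Type*} [Ring R] [AddCommGroup L] [Module R L]
    [AddCommGroup M] [Module R M]
    (c : ℕ → Submodule R L) (d : ℕ → Submodule R M)
    (hcA : StrictAnti c) (hdA : StrictAnti d)
    (hdN : ∀ N : Submodule R M, N ≠ ⊥ ↔ ∃ n, N = d n)
    (f : L →ₗ[R] M) (hf : Function.Injective f)
    (hc : ∀ n, c n ≠ ⊥)
    (j : ℕ) (hj : (c 0).map f = d j) :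
    ∀ n, ∃ m, j + n ≤ m ∧ (c n).map f = d m := by
  have hker : LinearMap.ker f = ⊥ := LinearMap.ker_eq_bot.mpr hf
  have hmono : StrictMono (Submodule.map f) := Submodule.map_strictMono_of_injective hf
  intro n
  induction n with
  | zero => exact ⟨j, le_refl _, hj⟩
  | succ n ih =>
    obtain ⟨m, hm, heq⟩ := ih
    have hne : (c (n + 1)).map f ≠ ⊥ := by
      intro h
      apply hc (n + 1)
      apply Submodule.map_injective_of_injective hf
      rw [h, Submodule.map_bot]
    obtain ⟨m', heq'⟩ := (hdN _).mp hne
    have hlt : d m' < d m := by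
      rw [← heq, ← heq']
      exact hmono (hcA (Nat.lt_succ_self n))
    have : m < m' := hdA.lt_iff_gt.mp hlt
    exact ⟨m', by omega, heq'⟩

theorem bijective_of_fixed_point_of_coNatChain
    {R L M : Type*} [Ring R] [AddCommGroup L] [Module R L] [AddCommGroup M] [Module R M]
    (hL : IsUniserialModule R L) (hM : IsUniserialModule R M)
    (hLc : HasCoNatChain R L) (hMc : HasCoNatChain R M)
    (f : L →ₗ[R] M) (g : M →ₗ[R] L) (x : L) (hx : x ≠ 0) (hfix : g (f x) = x) :
    Function.Bijective f := by
  obtain ⟨c, hcA, hc0, hcN⟩ := hLc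
  obtain ⟨d, hdA, hd0, hdN⟩ := hMc
  have hfx : f x ≠ 0 := by
    intro h
    apply hx
    rw [← hfix, h, map_zero]
  -- f is injective
  have hfinj : Function.Injective f := by
    rw [← LinearMap.ker_eq_bot]
    by_contra hker
    rcases hL (LinearMap.ker f) (Submodule.span R {x}) with h | h
    · obtain ⟨y, hyk, hy0⟩ := Submodule.exists_mem_ne_zero_of_ne_bot hker
      obtain ⟨r, rfl⟩ := Submodule.mem_span_singleton.mp (h hyk)
      apply hy0
      have : f (r • x) = 0 := hyk
      have : g (f (r • x)) = 0 := by rw [this, map_zero]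
      rwa [map_smul, map_smul, hfix] at this
    · exact hfx (h (Submodule.mem_span_singleton_self x))
  -- g is injective
  have hginj : Function.Injective g := by
    rw [← LinearMap.ker_eq_bot]
    by_contra hker
    rcases hM (LinearMap.ker g) (Submodule.span R {f x}) with h | h
    · obtain ⟨y, hyk, hy0⟩ := Submodule.exists_mem_ne_zero_of_ne_bot hker
      obtain ⟨r, rfl⟩ := Submodule.mem_span_singleton.mp (h hyk)
      apply hy0
      have h0 : g (r • f x) = 0 := hyk
      rw [map_smul, hfix] at h0
      rw [← map_smul, h0, map_zero]
    · apply hx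
      rw [← hfix]
      exact h (Submodule.mem_span_singleton_self (f x))
  have hcbot : ∀ n, c n ≠ ⊥ := fun n => (hcN (c n)).mpr ⟨n, rfl⟩
  have hdbot : ∀ n, d n ≠ ⊥ := fun n => (hdN (d n)).mpr ⟨n, rfl⟩
  -- indices for range f and span {x}
  have hrange_ne : (c 0).map f ≠ ⊥ := by
    rw [hc0, Submodule.map_top]
    intro h
    exact hfx ((Submodule.eq_bot_iff _).mp h (f x) (LinearMap.mem_range_self f x))
  obtain ⟨j, hj⟩ := (hdN _).mp hrange_ne
  have hgrange_ne : (d 0).map g ≠ ⊥ := by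
    rw [hd0, Submodule.map_top]
    intro h
    apply hx
    rw [← hfix]
    exact (Submodule.eq_bot_iff _).mp h (g (f x)) (LinearMap.mem_range_self g (f x))
  obtain ⟨k, hk⟩ := (hcN _).mp hgrange_ne
  have hspan_ne : Submodule.span R {x} ≠ ⊥ := by
    rw [Ne, Submodule.span_singleton_eq_bot]
    exact hx
  obtain ⟨i, hi⟩ := (hcN _).mp hspan_ne
  -- the chain maps
  have hF := chain_map_exists c d hcA hdA hdN f hfinj hcbot j hj
  have hG := chain_map_exists d c hdA hcA hcN g hginj hdbot k hk
  obtain ⟨m₁, hm₁, heq₁⟩ := hF i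
  obtain ⟨m₂, hm₂, heq₂⟩ := hG (j + i)
  -- x ∈ c (j + i)
  have hxi : x ∈ c i := hi ▸ Submodule.mem_span_singleton_self x
  have hfxm : f x ∈ d (j + i) := by
    have : f x ∈ d m₁ := heq₁ ▸ Submodule.mem_map_of_mem hxi
    exact hdA.antitone (by omega : j + i ≤ m₁) this
  have hxji : x ∈ c (j + i) := by
    have h1 : g (f x) ∈ c m₂ := heq₂ ▸ Submodule.mem_map_of_mem hfxm
    rw [hfix] at h1
    exact hcA.antitone (by omega : j + i ≤ m₂) h1
  -- conclude j = 0
  have hle : c i ≤ c (j + i) := by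
    rw [← hi]
    exact (Submodule.span_singleton_le_iff_mem x _).mpr hxji
  have hj0 : j = 0 := by
    have := hcA.le_iff_ge.mp hle
    omega
  -- surjectivity
  have hsurj : Function.Surjective f := by
    rw [← LinearMap.range_eq_top, ← Submodule.map_top, ← hc0, hj, hj0, hd0]
  exact ⟨hfinj, hsurj⟩
end

section
/- Let K be a field, and let A = K⟨a,b⟩/(a², b², ab, ba) be the K-algebra with two generators a, b subject to a² = b² = ab = ba = 0. For n ≥ 2, consider the two n-dimensional A-modules V and W with bases v₁,…,vₙ and w₁,…,wₙ where a·vᵢ = v_{i+1} and a·wᵢ = w_{i+1} for i < n (and a·vₙ = a·wₙ = 0), b·v₁ = vₙ, b·vᵢ = 0 for i > 1, and b·wᵢ = 0 for all i. Then V and W are both uniserial of length n, but V ≇ W. -/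
section Helpers

variable {K A M : Type*} [Field K] [Ring A] [Algebra K A]
  [AddCommGroup M] [Module K M] [Module A M] [IsScalarTower K A M]

private lemma aks (r : A) (c : K) (x : M) : r • c • x = c • r • x := by
  rw [← algebraMap_smul A c x, ← mul_smul, ← Algebra.commutes, mul_smul, algebraMap_smul]

private lemma ksmul_mem (N : Submodule A M) (c : K) {x : M} (h : x ∈ N) : c • x ∈ N := by
  rw [← algebraMap_smul A c x]; exact N.smul_mem _ h

variable {n : ℕ}

private lemma hpow (a : A) (v : Module.Basis (Fin n) K M)
    (hav : ∀ i : Fin n, a • v i = if h : (i : ℕ) + 1 < n then v ⟨(i : ℕ) + 1, h⟩ else 0)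
    (k : ℕ) (j : Fin n) :
    a ^ k • v j = if h : (j : ℕ) + k < n then v ⟨(j : ℕ) + k, h⟩ else 0 := by
  induction k with
  | zero =>
    rw [pow_zero, one_smul, dif_pos (by omega : (j : ℕ) + 0 < n)]
    congr 1
  | succ k ih =>
    rw [pow_succ', mul_smul, ih]
    by_cases h : (j : ℕ) + k < n
    · rw [dif_pos h, hav]
      by_cases h2 : (j : ℕ) + k + 1 < n
      · rw [dif_pos h2, dif_pos (by omega : (j : ℕ) + (k + 1) < n)]
        exact congrArg v (Fin.ext (show (j : ℕ) + k + 1 = (j : ℕ) + (k + 1) by omega))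
      · rw [dif_neg h2, dif_neg (by omega : ¬ ((j : ℕ) + (k + 1) < n))]
    · rw [dif_neg h, smul_zero, dif_neg (by omega : ¬ ((j : ℕ) + (k + 1) < n))]

private lemma mem_ge (a : A) (v : Module.Basis (Fin n) K M)
    (hav : ∀ i : Fin n, a • v i = if h : (i : ℕ) + 1 < n then v ⟨(i : ℕ) + 1, h⟩ else 0)
    (N : Submodule A M) {x : M} (hx : x ∈ N) (i : Fin n)
    (hi : v.repr x i ≠ 0) (hmin : ∀ m : Fin n, (m : ℕ) < (i : ℕ) → v.repr x m = 0) :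
    ∀ j : Fin n, (i : ℕ) ≤ (j : ℕ) → v j ∈ N := by
  suffices H : ∀ d : ℕ, ∀ j : Fin n, n - (j : ℕ) ≤ d → (i : ℕ) ≤ (j : ℕ) → v j ∈ N from
    fun j hj => H n j (by omega) hj
  intro d
  induction d with
  | zero => intro j h _; exact absurd h (by have := j.isLt; omega)
  | succ d ih =>
    intro j hd hij
    have hup : ∀ j' : Fin n, (j : ℕ) < (j' : ℕ) → v j' ∈ N := fun j' h =>
      ih j' (by omega) (by omega)
    set k := (j : ℕ) - (i : ℕ) with hk
    have hsum : a ^ k • x = ∑ m : Fin n, v.repr x m • (a ^ k • v m) := by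
      conv_lhs => rw [← v.sum_repr x]
      rw [Finset.smul_sum]
      exact Finset.sum_congr rfl fun m _ => aks _ _ _
    have hterm : ∀ m ∈ Finset.univ.erase i, v.repr x m • (a ^ k • v m) ∈ N := by
      intro m hm
      have hne : m ≠ i := Finset.ne_of_mem_erase hm
      rcases lt_or_gt_of_ne (fun h : (m : ℕ) = (i : ℕ) => hne (Fin.ext h)) with h | h
      · rw [hmin m h, zero_smul]; exact N.zero_mem
      · rw [hpow a v hav]
        by_cases h2 : (m : ℕ) + k < n
        · exact dif_pos h2 ▸ ksmul_mem N _ (hup ⟨(m : ℕ) + k, h2⟩ (show (j : ℕ) < (m : ℕ) + k by omega))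
        · rw [dif_neg h2, smul_zero]; exact N.zero_mem
    have hmem : v.repr x i • (a ^ k • v i) ∈ N := by
      have heq : v.repr x i • (a ^ k • v i)
          = a ^ k • x - ∑ m ∈ Finset.univ.erase i, v.repr x m • (a ^ k • v m) := by
        rw [hsum, ← Finset.add_sum_erase _ _ (Finset.mem_univ i), add_sub_cancel_right]
      rw [heq]
      exact N.sub_mem (N.smul_mem _ hx) (N.sum_mem hterm)
    rw [hpow a v hav, dif_pos (show (i : ℕ) + k < n by have := j.isLt; omega)] at hmem
    have hj : (⟨(i : ℕ) + k, by have := j.isLt; omega⟩ : Fin n) = j := Fin.ext (show (i : ℕ) + k = (j : ℕ) by omega)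
    rw [hj] at hmem
    have h2 : (v.repr x i)⁻¹ • (v.repr x i • v j) ∈ N := ksmul_mem N _ hmem
    rwa [smul_smul, inv_mul_cancel₀ hi, one_smul] at h2

private lemma mem_ge' (a : A) (v : Module.Basis (Fin n) K M)
    (hav : ∀ i : Fin n, a • v i = if h : (i : ℕ) + 1 < n then v ⟨(i : ℕ) + 1, h⟩ else 0)
    (N : Submodule A M) {x : M} (hx : x ∈ N) (i : Fin n)
    (hi : v.repr x i ≠ 0) : ∀ j : Fin n, (i : ℕ) ≤ (j : ℕ) → v j ∈ N := by
  classical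
  have hex : ∃ d : ℕ, ∃ h : d < n, v.repr x ⟨d, h⟩ ≠ 0 := ⟨(i : ℕ), i.isLt, by simpa using hi⟩
  obtain ⟨h0, hne⟩ := Nat.find_spec hex
  have hmin : ∀ m : Fin n, (m : ℕ) < Nat.find hex → v.repr x m = 0 := by
    intro m hm
    by_contra hc
    exact Nat.find_min hex hm ⟨m.isLt, by simpa using hc⟩
  have hd : Nat.find hex ≤ (i : ℕ) := Nat.find_min' hex ⟨i.isLt, by simpa using hi⟩
  intro j hj
  exact mem_ge a v hav N hx ⟨Nat.find hex, h0⟩ hne hmin j (le_trans hd hj)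

private lemma mem_of_coords (v : Module.Basis (Fin n) K M) (N : Submodule A M) (x : M)
    (h : ∀ j : Fin n, v.repr x j ≠ 0 → v j ∈ N) : x ∈ N := by
  rw [← v.sum_repr x]
  refine N.sum_mem fun m _ => ?_
  by_cases hc : v.repr x m = 0
  · rw [hc, zero_smul]; exact N.zero_mem
  · exact ksmul_mem N _ (h m hc)

private lemma unis (a : A) (v : Module.Basis (Fin n) K M)
    (hav : ∀ i : Fin n, a • v i = if h : (i : ℕ) + 1 < n then v ⟨(i : ℕ) + 1, h⟩ else 0) :
    IsUniserialModule A M := by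
  intro N P
  by_cases hNP : N ≤ P
  · exact Or.inl hNP
  · right
    obtain ⟨x, hxN, hxP⟩ := SetLike.not_le_iff_exists.mp hNP
    have hj0 : ∃ j0 : Fin n, v.repr x j0 ≠ 0 ∧ v j0 ∉ P := by
      by_contra hcon
      push_neg at hcon
      exact hxP (mem_of_coords v P x hcon)
    obtain ⟨j0, hj0r, hj0P⟩ := hj0
    intro y hy
    apply mem_of_coords v N y
    intro j hjr
    rcases le_or_gt (j0 : ℕ) (j : ℕ) with h | h
    · exact mem_ge' a v hav N hxN j0 hj0r j h
    · exact absurd (mem_ge' a v hav P hy j hjr j0 (le_of_lt h)) hj0P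

private def QK (v : Module.Basis (Fin n) K M) (i : ℕ) : Submodule K M :=
  Submodule.span K (v '' {m : Fin n | i ≤ (m : ℕ)})

private lemma mem_QK_iff (v : Module.Basis (Fin n) K M) (x : M) (i : ℕ) :
    x ∈ QK v i ↔ ∀ m : Fin n, (m : ℕ) < i → v.repr x m = 0 := by
  constructor
  · intro hx
    induction hx using Submodule.span_induction with
    | mem y hy =>
      obtain ⟨m', hm', rfl⟩ := hy
      intro m hm
      rw [v.repr_self, Finsupp.single_apply, if_neg (fun heq => by subst heq; simp only [Set.mem_setOf_eq] at hm'; omega)]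
    | zero => intro m _; simp
    | add x y hx hy ihx ihy => intro m hm; rw [map_add, Finsupp.add_apply, ihx m hm, ihy m hm, add_zero]
    | smul c x hx ihx => intro m hm; rw [map_smul, Finsupp.smul_apply, ihx m hm, smul_zero]
  · intro h
    rw [← v.sum_repr x]
    refine Submodule.sum_mem _ fun m _ => ?_
    by_cases hm : i ≤ (m : ℕ)
    · exact Submodule.smul_mem _ _ (Submodule.subset_span ⟨m, hm, rfl⟩)
    · rw [h m (by omega), zero_smul]; exact Submodule.zero_mem _

private def stab (P : Submodule K M) : Subalgebra K A where
  carrier := {r : A | ∀ x ∈ P, r • x ∈ P}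
  mul_mem' := by intro r s hr hs x hx; rw [mul_smul]; exact hr _ (hs _ hx)
  one_mem' := by intro x hx; rwa [one_smul]
  add_mem' := by intro r s hr hs x hx; rw [add_smul]; exact P.add_mem (hr _ hx) (hs _ hx)
  zero_mem' := by intro x hx; rw [zero_smul]; exact P.zero_mem
  algebraMap_mem' := by intro c x hx; rw [algebraMap_smul]; exact P.smul_mem c hx

private lemma stab_gen (v : Module.Basis (Fin n) K M) (i : ℕ) (r : A)
    (hr : ∀ m : Fin n, i ≤ (m : ℕ) → r • v m ∈ QK v i) :
    ∀ x ∈ QK v i, r • x ∈ QK v i := by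
  intro x hx
  induction hx using Submodule.span_induction with
  | mem y hy => obtain ⟨m, hm, rfl⟩ := hy; exact hr m hm
  | zero => rw [smul_zero]; exact Submodule.zero_mem _
  | add x y hx hy ihx ihy => rw [smul_add]; exact Submodule.add_mem _ ihx ihy
  | smul c x hx ihx => rw [aks]; exact Submodule.smul_mem _ _ ihx

private def QA (a b : A) (hgen : Algebra.adjoin K {a, b} = ⊤) (v : Module.Basis (Fin n) K M)
    (hav : ∀ i : Fin n, a • v i = if h : (i : ℕ) + 1 < n then v ⟨(i : ℕ) + 1, h⟩ else 0)
    (hb : ∀ (m : Fin n) (i : ℕ), i ≤ (m : ℕ) → b • v m ∈ QK v i)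
    (i : ℕ) : Submodule A M where
  carrier := QK v i
  add_mem' := fun hx hy => (QK v i).add_mem hx hy
  zero_mem' := (QK v i).zero_mem
  smul_mem' := by
    intro r x hx
    have ha' : a ∈ stab (QK v i) := stab_gen v i a (fun m hm => by
      rw [hav m]
      by_cases h : (m : ℕ) + 1 < n
      · rw [dif_pos h]
        exact Submodule.subset_span ⟨⟨(m : ℕ) + 1, h⟩, show i ≤ (m : ℕ) + 1 by omega, rfl⟩
      · rw [dif_neg h]; exact Submodule.zero_mem _)
    have hb' : b ∈ stab (QK v i) := stab_gen v i b (fun m hm => hb m i hm)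
    have htop : (⊤ : Subalgebra K A) ≤ stab (QK v i) := by
      rw [← hgen]
      refine Algebra.adjoin_le ?_
      intro r hr
      rcases hr with rfl | hr
      · exact ha'
      · rw [Set.mem_singleton_iff] at hr; subst hr; exact hb'
    exact htop Algebra.mem_top x hx

private lemma mem_QA (a b : A) (hgen : Algebra.adjoin K {a, b} = ⊤) (v : Module.Basis (Fin n) K M)
    (hav : ∀ i : Fin n, a • v i = if h : (i : ℕ) + 1 < n then v ⟨(i : ℕ) + 1, h⟩ else 0)
    (hb : ∀ (m : Fin n) (i : ℕ), i ≤ (m : ℕ) → b • v m ∈ QK v i)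
    (i : ℕ) (x : M) : x ∈ QA a b hgen v hav hb i ↔ x ∈ QK v i := Iff.rfl

private lemma QA_covby (a b : A) (hgen : Algebra.adjoin K {a, b} = ⊤) (v : Module.Basis (Fin n) K M)
    (hav : ∀ i : Fin n, a • v i = if h : (i : ℕ) + 1 < n then v ⟨(i : ℕ) + 1, h⟩ else 0)
    (hb : ∀ (m : Fin n) (i : ℕ), i ≤ (m : ℕ) → b • v m ∈ QK v i)
    (i : ℕ) (hi : i < n) :
    QA a b hgen v hav hb (i + 1) ⋖ QA a b hgen v hav hb i := by
  have hle : QA a b hgen v hav hb (i + 1) ≤ QA a b hgen v hav hb i := by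
    intro x hx
    rw [mem_QA, mem_QK_iff] at hx ⊢
    exact fun m hm => hx m (by omega)
  have h1 : v ⟨i, hi⟩ ∈ QK v i :=
    Submodule.subset_span ⟨⟨i, hi⟩, show i ≤ i from le_refl i, rfl⟩
  have h2 : v ⟨i, hi⟩ ∉ QK v (i + 1) := by
    intro h
    have := (mem_QK_iff v _ (i + 1)).mp h ⟨i, hi⟩ (Nat.lt_succ_self i)
    rw [v.repr_self, Finsupp.single_apply, if_pos rfl] at this
    exact one_ne_zero this
  constructor
  · refine lt_of_le_of_ne hle (fun heq => h2 ?_)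
    have hmem : v ⟨i, hi⟩ ∈ QA a b hgen v hav hb i := h1
    rw [← heq] at hmem
    exact hmem
  · intro N hlt hlt2
    obtain ⟨x, hxN, hxQ⟩ := SetLike.exists_of_lt hlt
    have hxQi : x ∈ QK v i := hlt2.le hxN
    have hcoords := (mem_QK_iff v x i).mp hxQi
    have hxr : v.repr x ⟨i, hi⟩ ≠ 0 := by
      have := mt (mem_QK_iff v x (i + 1)).mpr hxQ
      push_neg at this
      obtain ⟨m, hm, hm0⟩ := this
      have hmi : (m : ℕ) = i := by
        by_contra hne
        exact hm0 (hcoords m (by omega))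
      have : m = ⟨i, hi⟩ := Fin.ext hmi
      rwa [← this]
    have hgeN : ∀ j : Fin n, i ≤ (j : ℕ) → v j ∈ N := by
      intro j hj
      exact mem_ge' a v hav N hxN ⟨i, hi⟩ hxr j hj
    have hQiN : QA a b hgen v hav hb i ≤ N := by
      intro y hy
      apply mem_of_coords v N y
      intro j hjr
      have hji : i ≤ (j : ℕ) := by
        by_contra hc
        exact hjr ((mem_QK_iff v y i).mp hy j (by omega))
      exact hgeN j hji
    exact hlt2.not_ge hQiN

private lemma QA_bot (a b : A) (hgen : Algebra.adjoin K {a, b} = ⊤) (v : Module.Basis (Fin n) K M)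
    (hav : ∀ i : Fin n, a • v i = if h : (i : ℕ) + 1 < n then v ⟨(i : ℕ) + 1, h⟩ else 0)
    (hb : ∀ (m : Fin n) (i : ℕ), i ≤ (m : ℕ) → b • v m ∈ QK v i) :
    QA a b hgen v hav hb n = ⊥ := by
  ext x
  rw [mem_QA, mem_QK_iff, Submodule.mem_bot]
  constructor
  · intro h
    rw [← v.sum_repr x]
    exact Finset.sum_eq_zero fun m _ => by rw [h m m.isLt, zero_smul]
  · rintro rfl
    intro m _
    rw [map_zero, Finsupp.zero_apply]

private lemma QA_top (a b : A) (hgen : Algebra.adjoin K {a, b} = ⊤) (v : Module.Basis (Fin n) K M)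
    (hav : ∀ i : Fin n, a • v i = if h : (i : ℕ) + 1 < n then v ⟨(i : ℕ) + 1, h⟩ else 0)
    (hb : ∀ (m : Fin n) (i : ℕ), i ≤ (m : ℕ) → b • v m ∈ QK v i) :
    QA a b hgen v hav hb 0 = ⊤ := by
  rw [eq_top_iff]
  intro x _
  rw [mem_QA, mem_QK_iff]
  intro m hm
  omega

private lemma hasLength (a b : A) (hgen : Algebra.adjoin K {a, b} = ⊤) (v : Module.Basis (Fin n) K M)
    (hav : ∀ i : Fin n, a • v i = if h : (i : ℕ) + 1 < n then v ⟨(i : ℕ) + 1, h⟩ else 0)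
    (hb : ∀ (m : Fin n) (i : ℕ), i ≤ (m : ℕ) → b • v m ∈ QK v i) :
    HasLength A M n := by
  refine ⟨⟨n, fun j => QA a b hgen v hav hb (n - (j : ℕ)), ?_⟩, ?_, ?_, rfl⟩
  · intro j
    show QA a b hgen v hav hb (n - ((Fin.castSucc j : Fin (n + 1)) : ℕ))
        ⋖ QA a b hgen v hav hb (n - ((Fin.succ j : Fin (n + 1)) : ℕ))
    rw [Fin.coe_castSucc, Fin.val_succ]
    have hlt := j.isLt
    have e1 : n - (j : ℕ) = (n - ((j : ℕ) + 1)) + 1 := by omega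
    rw [e1]
    exact QA_covby a b hgen v hav hb (n - ((j : ℕ) + 1)) (by omega)
  · show QA a b hgen v hav hb (n - ((0 : Fin (n + 1)) : ℕ)) = ⊥
    rw [Fin.val_zero, Nat.sub_zero]
    exact QA_bot a b hgen v hav hb
  · show QA a b hgen v hav hb (n - ((Fin.last n : Fin (n + 1)) : ℕ)) = ⊤
    rw [Fin.val_last, Nat.sub_self]
    exact QA_top a b hgen v hav hb

end Helpers

/-- Over the algebra `A = K⟨a,b⟩/(a², b², ab, ba)`, the modules `V` (with `a·vᵢ = vᵢ₊₁`,
`b·v₁ = vₙ`, `b·vᵢ = 0` for `i > 1`) and `W` (with `a·wᵢ = wᵢ₊₁`, `b·wᵢ = 0`) are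
uniserial of length `n` but not isomorphic. -/
theorem uniserial_not_iso_two_loops
    {K A V W : Type*} [Field K] [Ring A] [Algebra K A]
    [AddCommGroup V] [Module K V] [Module A V] [IsScalarTower K A V]
    [AddCommGroup W] [Module K W] [Module A W] [IsScalarTower K A W]
    (a b : A)
    (ha2 : a * a = 0) (hb2 : b * b = 0) (hab : a * b = 0) (hba : b * a = 0)
    (hgen : Algebra.adjoin K {a, b} = ⊤)
    (n : ℕ) (hn : 2 ≤ n)
    (v : Module.Basis (Fin n) K V) (w : Module.Basis (Fin n) K W)
    (hav : ∀ i : Fin n, a • v i = if h : (i : ℕ) + 1 < n then v ⟨(i : ℕ) + 1, h⟩ else 0)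
    (haw : ∀ i : Fin n, a • w i = if h : (i : ℕ) + 1 < n then w ⟨(i : ℕ) + 1, h⟩ else 0)
    (hbv0 : b • v ⟨0, by omega⟩ = v ⟨n - 1, by omega⟩)
    (hbv : ∀ i : Fin n, (i : ℕ) ≠ 0 → b • v i = 0)
    (hbw : ∀ i : Fin n, b • w i = 0) :
    IsUniserialModule A V ∧ IsUniserialModule A W ∧
    HasLength A V n ∧ HasLength A W n ∧
    ¬ Nonempty (V ≃ₗ[A] W) := by
  have hbV : ∀ (m : Fin n) (i : ℕ), i ≤ (m : ℕ) → b • v m ∈ QK v i := by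
    intro m i hm
    by_cases h0 : (m : ℕ) = 0
    · have hi0 : i = 0 := by omega
      subst hi0
      have hm0 : m = ⟨0, by omega⟩ := Fin.ext h0
      rw [hm0, hbv0]
      exact Submodule.subset_span ⟨⟨n - 1, by omega⟩, show 0 ≤ n - 1 from Nat.zero_le _, rfl⟩
    · rw [hbv m h0]; exact Submodule.zero_mem _
  have hbW : ∀ (m : Fin n) (i : ℕ), i ≤ (m : ℕ) → b • w m ∈ QK w i := by
    intro m i hm
    rw [hbw m]; exact Submodule.zero_mem _
  refine ⟨unis a v hav, unis a w haw, hasLength a b hgen v hav hbV,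
    hasLength a b hgen w haw hbW, ?_⟩
  rintro ⟨f⟩
  have hbWall : ∀ x : W, b • x = 0 := by
    intro x
    have hx : x ∈ Submodule.span K (Set.range w) := by rw [w.span_eq]; trivial
    induction hx using Submodule.span_induction with
    | mem y hy => obtain ⟨m, rfl⟩ := hy; exact hbw m
    | zero => exact smul_zero b
    | add x y _ _ ihx ihy => rw [smul_add, ihx, ihy, add_zero]
    | smul c x _ ih => rw [aks, ih, smul_zero]
  have h2 : b • v ⟨0, by omega⟩ = 0 := by
    apply f.injective
    rw [map_smul, hbWall, map_zero]
  rw [hbv0] at h2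
  exact v.ne_zero _ h2
end

section
/- Let C ⊆ D be a field extension and R = [[D, D], [0, C]]. For k ∈ D, let I_k be the left ideal R·[[1, k],[0, 0]] and let I_∞ = R·[[0, 1],[0, 0]] = [[0, D],[0, 0]]. Then for every λ ∈ D ∪ {∞}, the left ideal I_λ is a simple projective R-module, and all the I_λ are isomorphic to one another as R-modules. -/
open Matrix

/-- The triangular matrix ring `[[D, D], [0, C]]` as a `C`-subalgebra of `M₂(D)`. -/
def TriR (C D : Type*) [Field C] [Field D] [Algebra C D] :
    Subalgebra C (Matrix (Fin 2) (Fin 2) D) where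
  carrier := {m | m 1 0 = 0 ∧ ∃ c : C, m 1 1 = algebraMap C D c}
  add_mem' := by
    rintro a b ⟨ha1, ca, ha2⟩ ⟨hb1, cb, hb2⟩
    exact ⟨by simp [Matrix.add_apply, ha1, hb1], ca + cb, by simp [Matrix.add_apply, ha2, hb2]⟩
  zero_mem' := ⟨by simp, 0, by simp⟩
  mul_mem' := by
    rintro a b ⟨ha1, ca, ha2⟩ ⟨hb1, cb, hb2⟩
    constructor
    · simp [Matrix.mul_apply, Fin.sum_univ_two, ha1, hb1]
    · exact ⟨ca * cb, by simp [Matrix.mul_apply, Fin.sum_univ_two, ha1, ha2, hb1, hb2]⟩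
  one_mem' := ⟨by simp, 1, by simp⟩
  algebraMap_mem' := fun c =>
    ⟨by simp [Matrix.algebraMap_matrix_apply], c, by simp [Matrix.algebraMap_matrix_apply]⟩

set_option synthInstance.maxHeartbeats 1000000
set_option maxHeartbeats 1000000
set_option maxSynthPendingDepth 5

/-- The generator `[[1, k], [0, 0]]` of the left ideal `I_k` (for `k : D`), and the
generator `[[0, 1], [0, 0]]` of `I_∞` (for `none`), as elements of `R = [[D,D],[0,C]]`. -/
def triGen (C D : Type*) [Field C] [Field D] [Algebra C D] : Option D → ↥(TriR C D)
  | none => ⟨!![0, 1; 0, 0], by simp, 0, by simp⟩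
  | some k => ⟨!![1, k; 0, 0], by simp, 0, by simp⟩

/-- The left ideal `I_λ = R·[[1, λ],[0,0]]` for `λ : D`, resp. `I_∞ = R·[[0,1],[0,0]]`. -/
def triI (C D : Type*) [Field C] [Field D] [Algebra C D] (lam : Option D) :
    Submodule ↥(TriR C D) ↥(TriR C D) :=
  Submodule.span ↥(TriR C D) {triGen C D lam}


namespace TriAux

variable (C D : Type*) [Field C] [Field D] [Algebra C D]

/-- The matrix with "coordinate" `d` in `I_lam`. -/
def elt : Option D → D → Matrix (Fin 2) (Fin 2) D
  | none, d => !![0, d; 0, 0]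
  | some k, d => !![d, d * k; 0, 0]

/-- The coordinate of a matrix in `I_lam`. -/
def coord : Option D → Matrix (Fin 2) (Fin 2) D → D
  | none, x => x 0 1
  | some _, x => x 0 0

lemma elt_mem (lam : Option D) (d : D) : elt D lam d ∈ TriR C D := by
  cases lam <;> exact ⟨by simp [elt], 0, by simp [elt]⟩

lemma coord_elt (lam : Option D) (d : D) : coord D lam (elt D lam d) = d := by
  cases lam <;> simp [elt, coord]

lemma elt_zero (lam : Option D) : elt D lam 0 = 0 := by
  cases lam <;> · ext i j; fin_cases i <;> fin_cases j <;> simp [elt]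

lemma elt_add (lam : Option D) (d e : D) :
    elt D lam (d + e) = elt D lam d + elt D lam e := by
  cases lam <;> · ext i j; fin_cases i <;> fin_cases j <;> simp [elt, add_mul]

lemma elt_00 (k d : D) : elt D (some k) d 0 0 = d := by simp [elt]

lemma mul_elt (a : Matrix (Fin 2) (Fin 2) D) (ha : a 1 0 = 0) (lam : Option D) (d : D) :
    a * elt D lam d = elt D lam (a 0 0 * d) := by
  cases lam <;>
  · ext i j
    fin_cases i <;> fin_cases j <;>
      simp [elt, Matrix.mul_apply, Fin.sum_univ_two, ha, mul_assoc]

lemma gen_eq (lam : Option D) : ((triGen C D lam : ↥(TriR C D)) : Matrix (Fin 2) (Fin 2) D)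
    = elt D lam 1 := by
  cases lam <;> · ext i j; fin_cases i <;> fin_cases j <;> simp [triGen, elt]

lemma coe_smul (r : ↥(TriR C D)) (x : ↥(TriR C D)) :
    ((r • x : ↥(TriR C D)) : Matrix (Fin 2) (Fin 2) D) = (r : Matrix (Fin 2) (Fin 2) D) * x := by
  rw [smul_eq_mul]; rfl

lemma mem_triI (lam : Option D) (x : ↥(TriR C D)) :
    x ∈ triI C D lam ↔ ∃ d : D, (x : Matrix (Fin 2) (Fin 2) D) = elt D lam d := by
  rw [triI, Submodule.mem_span_singleton]
  constructor
  · rintro ⟨a, rfl⟩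
    refine ⟨(a : Matrix (Fin 2) (Fin 2) D) 0 0, ?_⟩
    rw [coe_smul, gen_eq, mul_elt D _ a.2.1, mul_one]
  · rintro ⟨d, hd⟩
    refine ⟨⟨elt D (some 0) d, elt_mem C D _ _⟩, ?_⟩
    apply Subtype.ext
    rw [coe_smul, gen_eq]
    show elt D (some 0) d * elt D lam 1 = _
    rw [mul_elt D _ (by simp [elt]) _ _, mul_one, hd, elt_00]

lemma val_eq (lam : Option D) (m : ↥(triI C D lam)) :
    ((m : ↥(TriR C D)) : Matrix (Fin 2) (Fin 2) D)
      = elt D lam (coord D lam ((m : ↥(TriR C D)) : Matrix (Fin 2) (Fin 2) D)) := by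
  obtain ⟨d, hd⟩ := (mem_triI C D lam m.1).1 m.2
  rw [hd, coord_elt]

/-- The coordinate of an element of `I_lam`. -/
def cval (lam : Option D) (m : ↥(triI C D lam)) : D :=
  coord D lam ((m : ↥(TriR C D)) : Matrix (Fin 2) (Fin 2) D)

lemma cval_ext {lam : Option D} {m n : ↥(triI C D lam)}
    (h : cval C D lam m = cval C D lam n) : m = n := by
  apply Subtype.ext; apply Subtype.ext
  rw [val_eq C D lam m, val_eq C D lam n]
  exact congrArg _ h

lemma cval_zero (lam : Option D) : cval C D lam 0 = 0 := by
  cases lam <;> simp [cval, coord]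

lemma cval_add (lam : Option D) (m n : ↥(triI C D lam)) :
    cval C D lam (m + n) = cval C D lam m + cval C D lam n := by
  cases lam <;> simp [cval, coord, Matrix.add_apply]

lemma cval_smul (lam : Option D) (r : ↥(TriR C D)) (m : ↥(triI C D lam)) :
    cval C D lam (r • m) = (r : Matrix (Fin 2) (Fin 2) D) 0 0 * cval C D lam m := by
  have : ((((r • m : ↥(triI C D lam)) : ↥(TriR C D))) : Matrix (Fin 2) (Fin 2) D)
      = (r : Matrix (Fin 2) (Fin 2) D) * ((m : ↥(TriR C D)) : Matrix (Fin 2) (Fin 2) D) := by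
    rw [show ((r • m : ↥(triI C D lam)) : ↥(TriR C D)) = r • (m : ↥(TriR C D)) from rfl,
      coe_smul]
  unfold cval
  rw [this, val_eq C D lam m, mul_elt D _ r.2.1, coord_elt, coord_elt]

/-- The element of `I_lam` with coordinate `d`. -/
def mk (lam : Option D) (d : D) : ↥(triI C D lam) :=
  ⟨⟨elt D lam d, elt_mem C D lam d⟩, (mem_triI C D lam _).2 ⟨d, rfl⟩⟩

lemma cval_mk (lam : Option D) (d : D) : cval C D lam (mk C D lam d) = d := by
  simp [cval, mk, coord_elt]

/-- The linear map `I_lam → I_mu` preserving coordinates. -/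
def lmap (lam mu : Option D) : ↥(triI C D lam) →ₗ[↥(TriR C D)] ↥(triI C D mu) where
  toFun m := mk C D mu (cval C D lam m)
  map_add' m n := by
    apply cval_ext C D
    rw [cval_add, cval_mk, cval_add, cval_mk, cval_mk]
  map_smul' r m := by
    apply cval_ext C D
    rw [RingHom.id_apply, cval_mk, cval_smul, cval_smul, cval_mk]

/-- The linear equivalence `I_lam ≃ I_mu`. -/
def lequiv (lam mu : Option D) : ↥(triI C D lam) ≃ₗ[↥(TriR C D)] ↥(triI C D mu) :=
  LinearEquiv.ofLinear (lmap C D lam mu) (lmap C D mu lam)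
    (by apply LinearMap.ext; intro m; apply cval_ext C D; simp [lmap, cval_mk])
    (by apply LinearMap.ext; intro m; apply cval_ext C D; simp [lmap, cval_mk])

lemma simple (lam : Option D) : IsSimpleModule ↥(TriR C D) ↥(triI C D lam) := by
  haveI : Nontrivial ↥(triI C D lam) := by
    refine ⟨mk C D lam 1, 0, fun h => ?_⟩
    have := congrArg (cval C D lam) h
    rw [cval_mk, cval_zero] at this
    exact one_ne_zero this
  refine { toNontrivial := inferInstance, eq_bot_or_eq_top := ?_ }
  intro N
  rcases eq_or_ne N ⊥ with h | h
  · exact Or.inl h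
  · right
    obtain ⟨m, hmN, hm⟩ := Submodule.exists_mem_ne_zero_of_ne_bot h
    have hc : cval C D lam m ≠ 0 := fun hc => hm (by
      apply cval_ext C D
      rw [hc, cval_zero])
    rw [eq_top_iff]
    intro y _
    have key : (⟨elt D (some 0) ((cval C D lam y) * (cval C D lam m)⁻¹),
        elt_mem C D _ _⟩ : ↥(TriR C D)) • m = y := by
      apply cval_ext C D
      rw [cval_smul]
      show elt D (some 0) _ 0 0 * _ = _
      rw [elt_00, inv_mul_cancel_right₀ hc]
    exact key ▸ N.smul_mem _ hmN

lemma projective_zero : Module.Projective ↥(TriR C D) ↥(triI C D (some 0)) := by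
  refine Module.Projective.of_split (M := ↥(TriR C D)) (triI C D (some 0)).subtype
    (LinearMap.codRestrict (triI C D (some 0))
      (LinearMap.toSpanSingleton _ _ (triGen C D (some 0)))
      (fun r => Submodule.smul_mem _ r (Submodule.mem_span_singleton_self _))) ?_
  apply LinearMap.ext
  intro m
  apply Subtype.ext
  apply Subtype.ext
  show (((m : ↥(TriR C D)) • triGen C D (some 0) : ↥(TriR C D)) : Matrix (Fin 2) (Fin 2) D) = _
  rw [coe_smul, gen_eq, mul_elt D _ (m : ↥(TriR C D)).2.1, mul_one]
  exact (val_eq C D (some 0) m).symm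

end TriAux

/-- For every `λ ∈ D ∪ {∞}`, the left ideal `I_λ` is a simple projective `R`-module,
`I_∞ = [[0, D],[0, 0]]`, and all the `I_λ` are pairwise isomorphic as `R`-modules. -/
theorem triI_simple_projective_iso (C D : Type*) [Field C] [Field D] [Algebra C D] :
    (∀ x : ↥(TriR C D), x ∈ triI C D none ↔
      ((x : Matrix (Fin 2) (Fin 2) D) 0 0 = 0 ∧ (x : Matrix (Fin 2) (Fin 2) D) 1 0 = 0 ∧
        (x : Matrix (Fin 2) (Fin 2) D) 1 1 = 0)) ∧
    ∀ lam : Option D,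
      IsSimpleModule ↥(TriR C D) ↥(triI C D lam) ∧
      Module.Projective ↥(TriR C D) ↥(triI C D lam) ∧
      ∀ mu : Option D, Nonempty (↥(triI C D lam) ≃ₗ[↥(TriR C D)] ↥(triI C D mu)) := by
  constructor
  · intro x
    rw [TriAux.mem_triI]
    constructor
    · rintro ⟨d, hd⟩
      rw [hd]
      refine ⟨by simp [TriAux.elt], by simp [TriAux.elt], by simp [TriAux.elt]⟩
    · rintro ⟨h00, h10, h11⟩
      refine ⟨(x : Matrix (Fin 2) (Fin 2) D) 0 1, ?_⟩
      ext i j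
      fin_cases i <;> fin_cases j <;> simp [TriAux.elt, h00, h10, h11]
  · intro lam
    haveI := TriAux.projective_zero C D
    exact ⟨TriAux.simple C D lam,
      Module.Projective.of_equiv (TriAux.lequiv C D (some 0) lam),
      fun mu => ⟨TriAux.lequiv C D lam mu⟩⟩
end

section
/- Let K be a field and let V be the K-vector space with basis v₀, v₁, v₂, …. Let A be the K-subalgebra of End_K(V) generated by the linear maps f₀, f₁, f₂, … where f₀(v_{n+1}) = vₙ for n ≥ 1, f₀(v₀) = f₀(v₁) = 0, and for i ≥ 1, fᵢ(v₀) = vᵢ and fᵢ(vⱼ) = 0 for j ≥ 1. Then V = A·v₀ is a cyclic A-module, f₁ is an A-module endomorphism of V with f₁² = 0, and End_A(V) ≅ K[x]/(x²). -/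
open Polynomial


/-- Osofsky's example: `V` is the `K`-vector space with basis `v₀, v₁, v₂, …` and `A` is the
`K`-subalgebra of `End_K(V)` generated by the maps `f₀, f₁, f₂, …` with
`f₀(v_{n+1}) = vₙ` for `n ≥ 1`, `f₀(v₀) = f₀(v₁) = 0`, and `fᵢ(v₀) = vᵢ`, `fᵢ(vⱼ) = 0`
for `i ≥ 1`, `j ≥ 1`.  Then `V = A·v₀` is cyclic, `f₁` is an `A`-module endomorphism of `V`
with `f₁² = 0`, and `End_A(V) ≅ K[x]/(x²)`. -/
theorem osofsky_endomorphism_ring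
    {K V : Type*} [Field K] [AddCommGroup V] [Module K V]
    (v : Module.Basis ℕ K V) (F : ℕ → Module.End K V)
    (hF0 : ∀ n : ℕ, 1 ≤ n → F 0 (v (n + 1)) = v n)
    (hF00 : F 0 (v 0) = 0) (hF01 : F 0 (v 1) = 0)
    (hFi0 : ∀ i : ℕ, 1 ≤ i → F i (v 0) = v i)
    (hFij : ∀ i j : ℕ, 1 ≤ i → 1 ≤ j → F i (v j) = 0)
    (A : Subalgebra K (Module.End K V)) (hA : A = Algebra.adjoin K (Set.range F)) :
    Submodule.span ↥A {v 0} = ⊤ ∧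
    (∀ a : ↥A, ∀ x : V, F 1 ((a : Module.End K V) x) = (a : Module.End K V) (F 1 x)) ∧
    F 1 ∘ₗ F 1 = 0 ∧
    Nonempty (Module.End ↥A V ≃+* (Polynomial K ⧸ Ideal.span {(Polynomial.X : Polynomial K) ^ 2})) := by
  have hFa : ∀ i, F i ∈ A := fun i => hA ▸ Algebra.subset_adjoin ⟨i, rfl⟩
  have hgen : ∀ i, F 1 * F i = F i * F 1 := by
    intro i
    apply v.ext
    intro n
    match i, n with
    | 0, 0 => simp [Module.End.mul_apply, hF00, hF01, hFi0 1 le_rfl]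
    | 0, 1 => simp [Module.End.mul_apply, hF01, hFij 1 1 le_rfl le_rfl]
    | 0, (m+2) => simp [Module.End.mul_apply, hF0 (m+1) (by omega), hFij 1 (m+1) le_rfl (by omega),
        hFij 1 (m+2) le_rfl (by omega)]
    | (j+1), 0 => simp [Module.End.mul_apply, hFi0 (j+1) (by omega), hFi0 1 le_rfl,
        hFij 1 (j+1) le_rfl (by omega), hFij (j+1) 1 (by omega) le_rfl]
    | (j+1), (k+1) => simp [Module.End.mul_apply, hFij (j+1) (k+1) (by omega) (by omega),
        hFij 1 (k+1) le_rfl (by omega)]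
  have hcommA' : ∀ a ∈ Algebra.adjoin K (Set.range F), F 1 * a = a * F 1 := by
    intro a ha
    induction ha using Algebra.adjoin_induction with
    | mem x hx => obtain ⟨i, rfl⟩ := hx; exact hgen i
    | algebraMap r => exact (Algebra.commutes r (F 1)).symm
    | add x y hx hy ihx ihy => simp only [mul_add, add_mul, ihx, ihy]
    | mul x y hx hy ihx ihy => rw [← mul_assoc, ihx, mul_assoc, ihy, mul_assoc]
  have hcommA : ∀ a : ↥A, F 1 * (a : Module.End K V) = a * F 1 :=
    fun a => hcommA' a (hA ▸ a.2)
  -- Part 2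
  have hcomm' : ∀ a : ↥A, ∀ x : V,
      F 1 ((a : Module.End K V) x) = (a : Module.End K V) (F 1 x) := by
    intro a x
    simpa [Module.End.mul_apply] using DFunLike.congr_fun (hcommA a) x
  -- Part 3
  have hFF : F 1 ∘ₗ F 1 = (0 : V →ₗ[K] V) := by
    apply v.ext
    intro n
    match n with
    | 0 => simp [hFi0 1 le_rfl, hFij 1 1 le_rfl le_rfl]
    | (k+1) => simp [hFij 1 (k+1) le_rfl (by omega)]
  -- Part 1
  have hspan : Submodule.span ↥A {v 0} = ⊤ := by
    rw [eq_top_iff]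
    rintro x -
    have hx : x ∈ Submodule.span K (Set.range v) := by rw [v.span_eq]; trivial
    refine Submodule.span_induction ?_ ?_ ?_ ?_ hx
    · rintro _ ⟨n, rfl⟩
      match n with
      | 0 => exact Submodule.mem_span_singleton_self _
      | (k+1) =>
        have : v (k+1) = (⟨F (k+1), hFa (k+1)⟩ : ↥A) • v 0 := (hFi0 (k+1) (by omega)).symm
        rw [this]
        exact Submodule.smul_mem _ _ (Submodule.mem_span_singleton_self _)
    · exact Submodule.zero_mem _
    · intro y z _ _ hy hz; exact Submodule.add_mem _ hy hz
    · intro c y _ hy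
      have : c • y = (⟨algebraMap K (Module.End K V) c, A.algebraMap_mem c⟩ : ↥A) • y :=
        (Module.algebraMap_end_apply K K V c y).symm
      rw [this]
      exact Submodule.smul_mem _ _ hy
  -- Part 4
  let g1 : Module.End ↥A V :=
    { toFun := F 1
      map_add' := fun x y => map_add (F 1) x y
      map_smul' := fun a x => hcomm' a x }
  let σ : K →+* Module.End ↥A V :=
    { toFun := fun c =>
        { toFun := fun x => c • x
          map_add' := fun x y => smul_add c x y
          map_smul' := fun a x => ((a : Module.End K V).map_smul c x).symm }
      map_one' := LinearMap.ext fun x => one_smul K x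
      map_mul' := fun c d => LinearMap.ext fun x => mul_smul c d x
      map_zero' := LinearMap.ext fun x => zero_smul K x
      map_add' := fun c d => LinearMap.ext fun x => add_smul c d x }
  have hcommσ : ∀ c, Commute (σ c) g1 := fun c => LinearMap.ext fun x => ((F 1).map_smul c x).symm
  let ψ' : Polynomial K →+* Module.End ↥A V := Polynomial.eval₂RingHom' σ g1 hcommσ
  have hψ'ev : ∀ a b : K, ψ' (C a + C b * X) = σ a + σ b * g1 := by
    intro a b
    simp [ψ', Polynomial.eval₂_add, Polynomial.eval₂_mul_X, Polynomial.eval₂_C]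
  have hg1sq : g1 * g1 = 0 := by
    apply LinearMap.ext
    intro x
    simpa [g1] using DFunLike.congr_fun hFF x
  have hX2 : ψ' (X ^ 2) = 0 := by
    have : ψ' (X ^ 2) = g1 * g1 := by
      simp [ψ', pow_two, Polynomial.eval₂_mul_X, Polynomial.eval₂_X]
    rw [this, hg1sq]
  have hker : ∀ p ∈ Ideal.span {(X : Polynomial K) ^ 2}, ψ' p = 0 := by
    intro p hp
    rw [Ideal.mem_span_singleton] at hp
    obtain ⟨q, rfl⟩ := hp
    rw [map_mul, hX2, zero_mul]
  let ψ : (Polynomial K ⧸ Ideal.span {(X : Polynomial K) ^ 2}) →+* Module.End ↥A V :=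
    Ideal.Quotient.lift _ ψ' hker
  have hval : ∀ a b : K, (σ a + σ b * g1) (v 0) = a • v 0 + b • v 1 := by
    intro a b
    simp only [LinearMap.add_apply, Module.End.mul_apply]
    show a • v 0 + b • (F 1 (v 0)) = a • v 0 + b • v 1
    rw [hFi0 1 le_rfl]
  have hred : ∀ p : Polynomial K, (Ideal.Quotient.mk (Ideal.span {(X : Polynomial K) ^ 2})) p
      = Ideal.Quotient.mk _ (C (p.coeff 0) + C (p.coeff 1) * X) := by
    intro p
    rw [Ideal.Quotient.eq, Ideal.mem_span_singleton, Polynomial.X_pow_dvd_iff]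
    intro d hd
    interval_cases d <;>
      simp [Polynomial.coeff_add, Polynomial.coeff_C, Polynomial.coeff_C_mul]
  have hab0 : ∀ a b : K, a • v 0 + b • v 1 = 0 → a = 0 ∧ b = 0 := by
    intro a b h
    have h0 := congrArg (fun w => v.repr w 0) h
    have h1 := congrArg (fun w => v.repr w 1) h
    simp [Module.Basis.repr_self, Finsupp.single_apply] at h0 h1
    exact ⟨h0, h1⟩
  have hinj : Function.Injective ψ := by
    rw [injective_iff_map_eq_zero]
    intro q hq
    obtain ⟨p, rfl⟩ := Ideal.Quotient.mk_surjective q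
    rw [hred p] at hq ⊢
    rw [show ψ (Ideal.Quotient.mk _ (C (p.coeff 0) + C (p.coeff 1) * X)) =
      ψ' (C (p.coeff 0) + C (p.coeff 1) * X) from Ideal.Quotient.lift_mk _ _ _, hψ'ev] at hq
    obtain ⟨ha, hb⟩ := hab0 _ _ (by rw [← hval]; simpa using DFunLike.congr_fun hq (v 0))
    rw [ha, hb]
    simp
  have hkey : ∀ n : ℕ, ∀ x : V, v.repr (F 0 x) (n+1) = v.repr x (n+2) := by
    intro n
    have hc : (v.coord (n+1)).comp (F 0) = v.coord (n+2) := by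
      apply v.ext
      intro m
      match m with
      | 0 => simp [hF00, Module.Basis.coord_apply, Module.Basis.repr_self, Finsupp.single_apply]
      | 1 => simp [hF01, Module.Basis.coord_apply, Module.Basis.repr_self, Finsupp.single_apply]
      | (k+2) =>
        simp only [LinearMap.comp_apply, hF0 (k+1) (by omega : 1 ≤ k+1), Module.Basis.coord_apply,
          Module.Basis.repr_self, Finsupp.single_apply]
        split_ifs with h1 h2 h2 <;> first | rfl | omega
    intro x
    simpa [Module.Basis.coord_apply] using DFunLike.congr_fun hc x
  have hsurj : Function.Surjective ψ := by
    intro g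
    have hF0w : F 0 (g (v 0)) = 0 := by
      have h := g.map_smul (⟨F 0, hFa 0⟩ : ↥A) (v 0)
      have h1 : (⟨F 0, hFa 0⟩ : ↥A) • (v 0) = (0 : V) := hF00
      rw [h1, map_zero] at h
      exact h.symm
    have hco : ∀ n : ℕ, v.repr (g (v 0)) (n+2) = 0 := by
      intro n
      rw [← hkey n, hF0w, map_zero, Finsupp.coe_zero, Pi.zero_apply]
    set a := v.repr (g (v 0)) 0 with ha
    set b := v.repr (g (v 0)) 1 with hb
    have hw : g (v 0) = a • v 0 + b • v 1 := by
      apply v.repr.injective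
      ext n
      match n with
      | 0 => simp [← ha, Module.Basis.repr_self, Finsupp.single_apply]
      | 1 => simp [← hb, Module.Basis.repr_self, Finsupp.single_apply]
      | (k+2) => simp [hco k, Module.Basis.repr_self, Finsupp.single_apply]
    refine ⟨Ideal.Quotient.mk _ (C a + C b * X), ?_⟩
    have hψ : ψ (Ideal.Quotient.mk _ (C a + C b * X)) = σ a + σ b * g1 := by
      rw [show ψ (Ideal.Quotient.mk _ (C a + C b * X)) = ψ' (C a + C b * X) from
        Ideal.Quotient.lift_mk _ _ _]
      exact hψ'ev a b
    rw [hψ]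
    apply LinearMap.ext_on hspan
    intro x hx
    rw [Set.mem_singleton_iff] at hx
    subst hx
    rw [hval, ← hw]
  exact ⟨hspan, hcomm', hFF, ⟨(RingEquiv.ofBijective ψ ⟨hinj, hsurj⟩).symm⟩⟩
end

section
/- Let R be a ring and let L, M be uniform R-modules of finite length n. If L ≇ M, then for any alternating sequence of n homomorphisms f₁: L → M, f₂: M → L, …, the image of the composite f_k ∘ ⋯ ∘ f₁ has length at most n − k for each 1 ≤ k ≤ n; in particular fₙ ∘ ⋯ ∘ f₁ = 0. -/
/-- A module has (composition) length at most `n`. -/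
def LengthLE (R M : Type*) [Ring R] [AddCommGroup M] [Module R M] (n : ℕ) : Prop :=
  ∃ m ≤ n, HasLength R M m

section Aux

variable {R : Type*} [Ring R] {M N : Type*} [AddCommGroup M] [Module R M]
  [AddCommGroup N] [Module R N]

theorem hasLength_congr (e : M ≃ₗ[R] N) {n : ℕ} (h : HasLength R M n) : HasLength R N n := by
  obtain ⟨s, hh, hl, hn⟩ := h
  let iso : Submodule R M ≃o Submodule R N := Submodule.orderIsoMapComap e
  refine ⟨⟨s.length, fun i => iso (s i), fun i => ?_⟩, ?_, ?_, hn⟩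
  · exact (apply_covBy_apply_iff iso).mpr (s.step i)
  · show iso s.head = ⊥
    rw [hh]; exact iso.map_bot
  · show iso s.last = ⊤
    rw [hl]; exact iso.map_top

theorem hasLength_unique {a b : ℕ} (ha : HasLength R M a) (hb : HasLength R M b) : a = b := by
  obtain ⟨s, sh, sl, rfl⟩ := ha
  obtain ⟨t, th, tl, rfl⟩ := hb
  exact (CompositionSeries.jordan_holder s t (sh.trans th.symm) (sl.trans tl.symm)).length_eq

theorem covBy_map_subtype {P : Submodule R M} {a b : Submodule R ↥P} (h : a ⋖ b) :
    a.map P.subtype ⋖ b.map P.subtype := by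
  have hinj : Function.Injective P.subtype := Subtype.val_injective
  constructor
  · exact lt_of_le_of_ne (Submodule.map_mono h.1.le)
      (fun e => h.1.ne (Submodule.map_injective_of_injective hinj e))
  · intro X h1 h2
    have hXP : X ≤ P := le_trans h2.le (Submodule.map_subtype_le P b)
    have hmc : (X.comap P.subtype).map P.subtype = X := by
      rw [Submodule.map_comap_subtype]; exact inf_eq_right.mpr hXP
    refine h.2 (c := X.comap P.subtype) ?_ ?_
    · refine lt_of_le_of_ne ?_ (fun e => h1.ne ?_)
      · calc a = (a.map P.subtype).comap P.subtype :=
            (Submodule.comap_map_eq_of_injective hinj a).symm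
          _ ≤ X.comap P.subtype := Submodule.comap_mono h1.le
      · rw [← e] at hmc; exact hmc
    · refine lt_of_le_of_ne ?_ (fun e => h2.ne ?_)
      · calc X.comap P.subtype ≤ (b.map P.subtype).comap P.subtype :=
            Submodule.comap_mono h2.le
          _ = b := Submodule.comap_map_eq_of_injective hinj b
      · rw [e] at hmc; exact hmc.symm

theorem covBy_comap_mkQ {P : Submodule R M} {a b : Submodule R (M ⧸ P)} (h : a ⋖ b) :
    a.comap P.mkQ ⋖ b.comap P.mkQ := by
  have hsurj : Function.Surjective P.mkQ := Submodule.mkQ_surjective P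
  constructor
  · exact lt_of_le_of_ne (Submodule.comap_mono h.1.le)
      (fun e => h.1.ne (Submodule.comap_injective_of_surjective hsurj e))
  · intro X h1 h2
    have hPX : P ≤ X := by
      have := le_trans (Submodule.comap_mono (bot_le : (⊥ : Submodule R (M ⧸ P)) ≤ a)) h1.le
      simpa using this
    have hcm : (X.map P.mkQ).comap P.mkQ = X := by
      rw [Submodule.comap_map_mkQ]; exact sup_eq_right.mpr hPX
    refine h.2 (c := X.map P.mkQ) ?_ ?_
    · refine lt_of_le_of_ne ?_ (fun e => h1.ne ?_)
      · calc a = (a.comap P.mkQ).map P.mkQ := (Submodule.map_comap_eq_of_surjective hsurj a).symm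
          _ ≤ X.map P.mkQ := Submodule.map_mono h1.le
      · rw [← e] at hcm; exact hcm
    · refine lt_of_le_of_ne ?_ (fun e => h2.ne ?_)
      · calc X.map P.mkQ ≤ (b.comap P.mkQ).map P.mkQ := Submodule.map_mono h2.le
          _ = b := Submodule.map_comap_eq_of_surjective hsurj b
      · rw [e] at hcm; exact hcm.symm

theorem hasLength_add {P : Submodule R M} {a b m : ℕ} (hm : HasLength R M m)
    (ha : HasLength R ↥P a) (hb : HasLength R (M ⧸ P) b) : a + b = m := by
  obtain ⟨s, sh, sl, slen⟩ := ha
  obtain ⟨t, th, tl, tlen⟩ := hb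
  let s' : CompositionSeries (Submodule R M) :=
    ⟨s.length, fun i => (s i).map P.subtype, fun i => covBy_map_subtype (s.step i)⟩
  let t' : CompositionSeries (Submodule R M) :=
    ⟨t.length, fun i => (t i).comap P.mkQ, fun i => covBy_comap_mkQ (t.step i)⟩
  have hs'h : s'.head = ⊥ := by
    show (s.head).map P.subtype = ⊥
    rw [sh, Submodule.map_bot]
  have hs'l : s'.last = P := by
    show (s.last).map P.subtype = P
    rw [sl, Submodule.map_subtype_top]
  have ht'h : t'.head = P := by
    show (t.head).comap P.mkQ = P
    rw [th]; simp
  have ht'l : t'.last = ⊤ := by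
    show (t.last).comap P.mkQ = ⊤
    rw [tl]; simp
  have hc : s'.last = t'.head := by rw [hs'l, ht'h]
  have : HasLength R M (a + b) := by
    refine ⟨s'.smash t' hc, ?_, ?_, ?_⟩
    · rw [RelSeries.head_smash]; exact hs'h
    · rw [RelSeries.last_smash]; exact ht'l
    · show s'.length + t'.length = a + b
      show s.length + t.length = a + b
      rw [slen, tlen]
  exact hasLength_unique this hm

theorem exists_hasLength_pair {m : ℕ} (hm : HasLength R M m) (P : Submodule R M) :
    ∃ a b, HasLength R ↥P a ∧ HasLength R (M ⧸ P) b ∧ a + b = m := by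
  obtain ⟨s0, hs01, hs02, _⟩ := id hm
  have hfl : IsFiniteLength R M := isFiniteLength_of_exists_compositionSeries ⟨s0, hs01, hs02⟩
  obtain ⟨hN, hA⟩ := isFiniteLength_iff_isNoetherian_isArtinian.mp hfl
  obtain ⟨s, hs1, hs2⟩ := exists_compositionSeries_of_isNoetherian_isArtinian R ↥P
  obtain ⟨t, ht1, ht2⟩ := exists_compositionSeries_of_isNoetherian_isArtinian R (M ⧸ P)
  exact ⟨s.length, t.length, ⟨s, hs1, hs2, rfl⟩, ⟨t, ht1, ht2, rfl⟩,
    hasLength_add hm ⟨s, hs1, hs2, rfl⟩ ⟨t, ht1, ht2, rfl⟩⟩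

theorem hasLength_zero_iff : HasLength R M 0 ↔ Subsingleton M := by
  constructor
  · rintro ⟨s, sh, sl, h0⟩
    have hbt : (⊥ : Submodule R M) = ⊤ := by
      rw [← sh, ← sl]
      show s 0 = s (Fin.last s.length)
      congr 1
      exact Fin.ext (by simp [h0])
    refine ⟨fun x y => ?_⟩
    have hx : x ∈ (⊥ : Submodule R M) := hbt ▸ Submodule.mem_top
    have hy : y ∈ (⊥ : Submodule R M) := hbt ▸ Submodule.mem_top
    rw [Submodule.mem_bot] at hx hy
    rw [hx, hy]
  · intro h
    have hsub : Subsingleton (Submodule R M) := inferInstance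
    exact ⟨RelSeries.singleton _ ⊥, rfl, Subsingleton.elim _ _, rfl⟩

theorem eq_bot_of_subsingleton' {P : Submodule R M} (h : Subsingleton ↥P) : P = ⊥ := by
  ext x
  simp only [Submodule.mem_bot]
  constructor
  · intro hx
    have := Subsingleton.elim (⟨x, hx⟩ : ↥P) ⟨0, P.zero_mem⟩
    exact congrArg Subtype.val this
  · rintro rfl; exact P.zero_mem

end Aux

section Step

variable {R : Type*} [Ring R] {A B : Type*} [AddCommGroup A] [Module R A]
  [AddCommGroup B] [Module R B]

theorem ker_ne_bot_of_not_iso {n : ℕ} (hAn : HasLength R A n) (hBn : HasLength R B n)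
    (hniso : ¬ Nonempty (A ≃ₗ[R] B)) (f : A →ₗ[R] B) : LinearMap.ker f ≠ ⊥ := by
  intro hk
  have hinj : Function.Injective f := LinearMap.ker_eq_bot.mp hk
  have hr : HasLength R ↥(LinearMap.range f) n :=
    hasLength_congr (LinearEquiv.ofInjective f hinj) hAn
  obtain ⟨a, b, ha, hb, hab⟩ := exists_hasLength_pair hBn (LinearMap.range f)
  have han : a = n := hasLength_unique ha hr
  have hb0 : b = 0 := by omega
  have htop : LinearMap.range f = ⊤ := by
    subst hb0
    exact Submodule.Quotient.subsingleton_iff.mp (hasLength_zero_iff.mp hb)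
  exact hniso ⟨LinearEquiv.ofBijective f ⟨hinj, LinearMap.range_eq_top.mp htop⟩⟩

theorem lengthLE_map {n : ℕ} (hA : IsUniformModule R A) (hAn : HasLength R A n)
    (hBn : HasLength R B n) (hniso : ¬ Nonempty (A ≃ₗ[R] B)) (f : A →ₗ[R] B)
    (N : Submodule R A) {m : ℕ} (hN : LengthLE R ↥N m) :
    LengthLE R ↥(N.map f) (m - 1) := by
  by_cases hNbot : N = ⊥
  · subst hNbot
    rw [Submodule.map_bot]
    refine ⟨0, Nat.zero_le _, hasLength_zero_iff.mpr ⟨fun x y => ?_⟩⟩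
    have hx := x.2; have hy := y.2
    rw [Submodule.mem_bot] at hx hy
    exact Subtype.ext (hx.trans hy.symm)
  · obtain ⟨m', hm'le, hm'⟩ := hN
    have hker := ker_ne_bot_of_not_iso hAn hBn hniso f
    have hK : LinearMap.ker f ⊓ N ≠ ⊥ := hA _ _ hker hNbot
    obtain ⟨x, hxmem, hx0⟩ := (Submodule.ne_bot_iff _).mp hK
    set f' := f.comp N.subtype with hf'
    have hkf' : LinearMap.ker f' ≠ ⊥ := by
      rw [Submodule.ne_bot_iff]
      refine ⟨⟨x, hxmem.2⟩, ?_, ?_⟩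
      · rw [LinearMap.mem_ker]
        exact hxmem.1
      · intro h
        exact hx0 (congrArg Subtype.val h)
    obtain ⟨a, b, ha, hb, hab⟩ := exists_hasLength_pair hm' (LinearMap.ker f')
    have ha1 : 1 ≤ a := by
      rcases Nat.eq_zero_or_pos a with h0 | h
      · exfalso
        apply hkf'
        apply eq_bot_of_subsingleton'
        subst h0
        exact hasLength_zero_iff.mp ha
      · exact h
    have hrange : LinearMap.range f' = N.map f := by
      rw [hf', LinearMap.range_comp, Submodule.range_subtype]
    have e2 : (↥N ⧸ LinearMap.ker f') ≃ₗ[R] ↥(N.map f) :=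
      f'.quotKerEquivRange.trans (LinearEquiv.ofEq _ _ hrange)
    exact ⟨b, by omega, hasLength_congr e2 hb⟩

end Step

theorem alternating_comp_eq_zero_of_not_iso
    {R L M : Type*} [Ring R] [AddCommGroup L] [Module R L] [AddCommGroup M] [Module R M]
    (n : ℕ) (hLlen : HasLength R L n) (hMlen : HasLength R M n)
    (hL : IsUniformModule R L) (hM : IsUniformModule R M)
    (hniso : ¬ Nonempty (L ≃ₗ[R] M))
    (u : ℕ → (L →ₗ[R] M)) (v : ℕ → (M →ₗ[R] L)) :
    (∀ k, 1 ≤ k → k ≤ n →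
      (altComp u v k).elim (fun h => LengthLE R ↥(LinearMap.range h) (n - k))
        (fun h => LengthLE R ↥(LinearMap.range h) (n - k))) ∧
    (altComp u v n).elim (· = 0) (· = 0) := by
  have hMniso : ¬ Nonempty (M ≃ₗ[R] L) := fun ⟨e⟩ => hniso ⟨e.symm⟩
  have key : ∀ k, k ≤ n →
      (altComp u v k).elim (fun h => LengthLE R ↥(LinearMap.range h) (n - k))
        (fun h => LengthLE R ↥(LinearMap.range h) (n - k)) := by
    intro k
    induction k with
    | zero =>
      intro _
      show LengthLE R ↥(LinearMap.range (LinearMap.id : L →ₗ[R] L)) (n - 0)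
      rw [LinearMap.range_id]
      exact ⟨n, by omega, hasLength_congr Submodule.topEquiv.symm hLlen⟩
    | succ k ih =>
      intro hk
      have ihk := ih (Nat.le_of_succ_le hk)
      rcases hcase : altComp u v k with h | h
      · rw [hcase] at ihk
        simp only [Sum.elim_inl] at ihk
        have step := lengthLE_map hL hLlen hMlen hniso (u k) (LinearMap.range h) ihk
        have hred : altComp u v (k + 1) = Sum.inr ((u k).comp h) := by
          unfold altComp
          rw [hcase]
        rw [hred]
        simp only [Sum.elim_inr]
        rw [LinearMap.range_comp]
        have : n - (k + 1) = n - k - 1 := by omega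
        rw [this]
        exact step
      · rw [hcase] at ihk
        simp only [Sum.elim_inr] at ihk
        have step := lengthLE_map hM hMlen hLlen hMniso (v k) (LinearMap.range h) ihk
        have hred : altComp u v (k + 1) = Sum.inl ((v k).comp h) := by
          unfold altComp
          rw [hcase]
        rw [hred]
        simp only [Sum.elim_inl]
        rw [LinearMap.range_comp]
        have : n - (k + 1) = n - k - 1 := by omega
        rw [this]
        exact step
  refine ⟨fun k _ hk => key k hk, ?_⟩
  have keyn := key n le_rfl
  rcases hcase : altComp u v n with h | h <;> rw [hcase] at keyn <;>
    simp only [Sum.elim_inl, Sum.elim_inr, Nat.sub_self] at keyn ⊢ <;>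
  · obtain ⟨m, hm0, hmlen⟩ := keyn
    have : m = 0 := by omega
    subst this
    have := eq_bot_of_subsingleton' (hasLength_zero_iff.mp hmlen)
    exact LinearMap.range_eq_bot.mp this
end
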